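/- Let n ≥ 1, let x, s ∈ ℝ^n have strictly positive entries, set μ := xᵀs/n, and let η > 0. Let β : {1,…,m} → {1,…,n} be injective, let r̂ ∈ ℝ^m, and define v ∈ ℝ^n by v_{β(i)} := √(x_{β(i)}/s_{β(i)}) · r̂_i for i = 1,…,m and v_j := 0 for every j not in the image of β. If ‖r̂‖₂ ≤ η √μ / √n, then ‖S v‖_∞ = max_j |s_j v_j| ≤ η μ. -/

import Mathlib

/-- if the residual `r̂` of the inexactly solved modified normal
equation system satisfies `‖r̂‖₂ ≤ η √μ / √n`, then the induced perturbation
`v` (supported on the basis indices `β i`, with `v (β i) = √(x_{β i}/s_{β i}) r̂ i`)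
satisfies `‖S v‖_∞ ≤ η μ`. -/
theorem residual_perturbation_bound
    {m n : ℕ} (hn : 1 ≤ n)
    (x s : Fin n → ℝ) (hx : ∀ i, 0 < x i) (hs : ∀ i, 0 < s i)
    (μ : ℝ) (hμ : μ = (∑ i, x i * s i) / (n : ℝ))
    (η : ℝ) (hη : 0 < η)
    (β : Fin m → Fin n) (hβ : Function.Injective β)
    (rhat : Fin m → ℝ)
    (v : Fin n → ℝ)
    (hv1 : ∀ i, v (β i) = Real.sqrt (x (β i) / s (β i)) * rhat i)
    (hv2 : ∀ j, (∀ i, β i ≠ j) → v j = 0)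
    (hr : Real.sqrt (∑ i, (rhat i) ^ 2) ≤ η * Real.sqrt μ / Real.sqrt (n : ℝ)) :
    ∀ j, |s j * v j| ≤ η * μ := by
  have hnpos : (0:ℝ) < n := by exact_mod_cast hn
  have hμpos : 0 < μ := by
    rw [hμ]
    apply div_pos _ hnpos
    apply Finset.sum_pos (fun i _ => mul_pos (hx i) (hs i))
    exact Finset.univ_nonempty_iff.2 ⟨⟨0, hn⟩⟩
  intro j
  by_cases hj : ∃ i, β i = j
  · obtain ⟨i, rfl⟩ := hj
    rw [hv1 i]
    have hxj := hx (β i); have hsj := hs (β i)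
    have key : s (β i) * Real.sqrt (x (β i) / s (β i)) =
        Real.sqrt (x (β i) * s (β i)) := by
      have hss : Real.sqrt (s (β i)) * Real.sqrt (s (β i)) = s (β i) :=
        Real.mul_self_sqrt hsj.le
      rw [Real.sqrt_div hxj.le, Real.sqrt_mul hxj.le, mul_comm (s (β i)),
        div_mul_eq_mul_div, div_eq_iff (by positivity : Real.sqrt (s (β i)) ≠ 0),
        mul_assoc, hss]
    rw [← mul_assoc, key, abs_mul,
      abs_of_nonneg (Real.sqrt_nonneg _)]
    -- bound each factor
    have h1 : Real.sqrt (x (β i) * s (β i)) ≤ Real.sqrt ((n:ℝ) * μ) := by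
      apply Real.sqrt_le_sqrt
      rw [hμ, mul_div_cancel₀ _ hnpos.ne']
      exact Finset.single_le_sum (fun k _ => (mul_pos (hx k) (hs k)).le)
        (Finset.mem_univ (β i))
    have h2 : |rhat i| ≤ η * Real.sqrt μ / Real.sqrt (n:ℝ) := by
      refine le_trans ?_ hr
      rw [← Real.sqrt_sq_eq_abs]
      apply Real.sqrt_le_sqrt
      exact Finset.single_le_sum (fun k _ => sq_nonneg (rhat k)) (Finset.mem_univ i)
    calc Real.sqrt (x (β i) * s (β i)) * |rhat i|
        ≤ Real.sqrt ((n:ℝ) * μ) * (η * Real.sqrt μ / Real.sqrt (n:ℝ)) := by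
          apply mul_le_mul h1 h2 (abs_nonneg _) (Real.sqrt_nonneg _)
      _ = η * μ := by
          rw [Real.sqrt_mul (by positivity)]
          field_simp
          rw [Real.sq_sqrt hμpos.le]
  · rw [hv2 j (fun i h => hj ⟨i, h⟩), mul_zero, abs_zero]
    positivity
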